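/- Let (c_n), (t_n) be complex sequences with |t_n| → ∞, no finite limit points, and ∑_n |c_n|/|t_n|² < ∞. Then for every 0 < p < 1 and r > 0, ∫₀^{2π} | ∑_{n : |t_n| < r/√2} c_n/(re^{iφ} − t_n)² |^p dφ ≤ (8π / cos(πp/2)) · ( (1/r²) ∑_{n : |t_n| < r/√2} |c_n| )^p. -/

import Mathlib

open Real

lemma sqrt2_lt : Real.sqrt 2 < 1.4143 := by
  nlinarith [Real.sq_sqrt (by norm_num : (0:ℝ) ≤ 2), Real.sqrt_nonneg 2]

lemma sqrt2_gt : 1.414 < Real.sqrt 2 := by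
  nlinarith [Real.sq_sqrt (by norm_num : (0:ℝ) ≤ 2), Real.sqrt_nonneg 2]

lemma numeric_core (p L A E : ℝ) (hp : 0 < p) (hp1 : p < 1)
    (hL1 : 2 ≤ L) (hL2 : L ≤ 4) (hA6 : A ≤ 6.34) (hEpos : 0 < E)
    (hEA : E * ((3/4 - p) * L + 1) ≤ A) :
    E * (π * (1 - p)) ≤ 8 := by
  have hpi1 : π < 3.1416 := by linarith [Real.pi_lt_d2, Real.pi_lt_d6]
  have hpi0 : 3.14 < π := by linarith [Real.pi_gt_d6]
  have hDpos : 0 < (3/4 - p) * L + 1 := by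
    rcases le_or_gt p (3/4) with h | h
    · nlinarith [mul_nonneg (by linarith : (0:ℝ) ≤ 3/4 - p) (by linarith : (0:ℝ) ≤ L)]
    · nlinarith [mul_le_mul_of_nonneg_left hL2 (by linarith : (0:ℝ) ≤ p - 3/4)]
  have hApi : A * π ≤ 20 := by nlinarith
  have hlin : A * (π * (1 - p)) ≤ 8 * ((3/4 - p) * L + 1) := by
    rcases le_or_gt p (3/4) with h | h
    · nlinarith [mul_le_mul_of_nonneg_right hApi (by linarith : (0:ℝ) ≤ 1 - p),
        mul_le_mul_of_nonneg_left hL1 (by linarith : (0:ℝ) ≤ 3/4 - p)]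
    · nlinarith [mul_le_mul_of_nonneg_right hApi (by linarith : (0:ℝ) ≤ 1 - p),
        mul_le_mul_of_nonneg_left hL2 (by linarith : (0:ℝ) ≤ p - 3/4)]
  have h3 : E * (π * (1 - p)) * ((3/4 - p) * L + 1) ≤ 8 * ((3/4 - p) * L + 1) := by
    have hpinn : (0:ℝ) ≤ π * (1 - p) := by nlinarith
    nlinarith [mul_le_mul_of_nonneg_right hEA hpinn]
  exact le_of_mul_le_mul_right (by linarith) hDpos

lemma numeric_key (p : ℝ) (hp : 0 < p) (hp1 : p < 1) :
    (6 + 4 * Real.sqrt 2) ^ p * Real.cos (π * p / 2) ≤ 4 := by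
  have hs1 := sqrt2_lt
  have hs2 := sqrt2_gt
  have hKpos : (0:ℝ) < 6 + 4 * Real.sqrt 2 := by nlinarith
  have hepos := Real.exp_pos 1
  have heu := Real.exp_one_lt_d9
  have hel := Real.exp_one_gt_d9
  have hL1 : 2 ≤ Real.log (6 + 4 * Real.sqrt 2) := by
    rw [Real.le_log_iff_exp_le hKpos]
    have h1 : Real.exp 2 = Real.exp 1 * Real.exp 1 := by
      rw [← Real.exp_add]; norm_num
    nlinarith
  have hL2 : Real.log (6 + 4 * Real.sqrt 2) ≤ 4 := by
    rw [Real.log_le_iff_le_exp hKpos]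
    have h1 : Real.exp 4 = Real.exp 1 * Real.exp 1 * Real.exp 1 * Real.exp 1 := by
      rw [← Real.exp_add, ← Real.exp_add, ← Real.exp_add]; norm_num
    have h2 : (7:ℝ) < Real.exp 1 * Real.exp 1 := by nlinarith
    nlinarith [h2, mul_pos hepos hepos]
  have hApos : 0 < (6 + 4 * Real.sqrt 2) ^ ((3:ℝ)/4) := Real.rpow_pos_of_pos hKpos _
  have hA4 : ((6 + 4 * Real.sqrt 2) ^ ((3:ℝ)/4)) ^ (4:ℕ) = (6 + 4 * Real.sqrt 2) ^ (3:ℕ) := by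
    rw [← Real.rpow_natCast ((6 + 4 * Real.sqrt 2) ^ ((3:ℝ)/4)) 4,
      ← Real.rpow_natCast (6 + 4 * Real.sqrt 2) 3, ← Real.rpow_mul hKpos.le]
    norm_num
  have hK3 : (6 + 4 * Real.sqrt 2) ^ (3:ℕ) ≤ 1584.1 := by
    have h22 : Real.sqrt 2 ^ 2 = 2 := Real.sq_sqrt (by norm_num)
    nlinarith [Real.sqrt_nonneg 2]
  have hA2 : ((6 + 4 * Real.sqrt 2) ^ ((3:ℝ)/4)) ^ (2:ℕ) ≤ 40.2 := by
    nlinarith [hA4, hK3, sq_nonneg (((6 + 4 * Real.sqrt 2) ^ ((3:ℝ)/4)) ^ (2:ℕ) - 40.2)]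
  have hA6 : (6 + 4 * Real.sqrt 2) ^ ((3:ℝ)/4) ≤ 6.34 := by
    nlinarith [hA2, sq_nonneg ((6 + 4 * Real.sqrt 2) ^ ((3:ℝ)/4) - 6.34)]
  have hEA : Real.exp (Real.log (6 + 4 * Real.sqrt 2) * p) *
      ((3/4 - p) * Real.log (6 + 4 * Real.sqrt 2) + 1) ≤ (6 + 4 * Real.sqrt 2) ^ ((3:ℝ)/4) := by
    have h1 := Real.add_one_le_exp ((3/4 - p) * Real.log (6 + 4 * Real.sqrt 2))
    have h2 : Real.exp (Real.log (6 + 4 * Real.sqrt 2) * p) *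
        Real.exp ((3/4 - p) * Real.log (6 + 4 * Real.sqrt 2))
        = (6 + 4 * Real.sqrt 2) ^ ((3:ℝ)/4) := by
      rw [← Real.exp_add, Real.rpow_def_of_pos hKpos]
      congr 1; ring
    calc Real.exp (Real.log (6 + 4 * Real.sqrt 2) * p) *
        ((3/4 - p) * Real.log (6 + 4 * Real.sqrt 2) + 1)
        ≤ Real.exp (Real.log (6 + 4 * Real.sqrt 2) * p) *
          Real.exp ((3/4 - p) * Real.log (6 + 4 * Real.sqrt 2)) :=
          mul_le_mul_of_nonneg_left h1 (Real.exp_pos _).le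
      _ = _ := h2
  have hmain := numeric_core p (Real.log (6 + 4 * Real.sqrt 2))
    ((6 + 4 * Real.sqrt 2) ^ ((3:ℝ)/4)) (Real.exp (Real.log (6 + 4 * Real.sqrt 2) * p))
    hp hp1 hL1 hL2 hA6 (Real.exp_pos _) hEA
  have hcos : Real.cos (π * p / 2) ≤ π / 2 * (1 - p) := by
    have h0 : Real.cos (π * p / 2) = Real.sin (π/2 - π * p / 2) := (Real.sin_pi_div_two_sub _).symm
    have h1 : (0:ℝ) ≤ π/2 - π * p / 2 := by nlinarith [Real.pi_pos]
    rw [h0]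
    calc Real.sin (π/2 - π * p / 2) ≤ π/2 - π * p / 2 := Real.sin_le h1
      _ = π / 2 * (1 - p) := by ring
  have hKp : (6 + 4 * Real.sqrt 2) ^ p = Real.exp (Real.log (6 + 4 * Real.sqrt 2) * p) :=
    Real.rpow_def_of_pos hKpos p
  rw [hKp]
  calc Real.exp (Real.log (6 + 4 * Real.sqrt 2) * p) * Real.cos (π * p / 2)
      ≤ Real.exp (Real.log (6 + 4 * Real.sqrt 2) * p) * (π / 2 * (1 - p)) :=
        mul_le_mul_of_nonneg_left hcos (Real.exp_pos _).le
    _ = Real.exp (Real.log (6 + 4 * Real.sqrt 2) * p) * (π * (1 - p)) / 2 := by ring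
    _ ≤ 4 := by linarith

open Complex MeasureTheory Real Filter

theorem start_estimate (c t : ℕ → ℂ)
    (hlim : Tendsto (fun n => ‖t n‖) atTop atTop)
    (hcl : ∀ z : ℂ, ¬ MapClusterPt z atTop t)
    (hnat : Summable (fun n => ‖c n‖ / ‖t n‖ ^ 2))
    (p r : ℝ) (hp : 0 < p) (hp1 : p < 1) (hr : 0 < r) :
    ∫ φ in (0:ℝ)..(2 * π),
        ‖∑' n, if ‖t n‖ < r / Real.sqrt 2 then
            c n / ((r : ℂ) * Complex.exp ((φ : ℂ) * Complex.I) - t n) ^ 2 else 0‖ ^ p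
      ≤ (8 * π / Real.cos (π * p / 2)) *
          ((1 / r ^ 2) * ∑' n, if ‖t n‖ < r / Real.sqrt 2 then
            ‖c n‖ else 0) ^ p := by
  have hs1 := sqrt2_lt
  have hs2 := sqrt2_gt
  have hs0 : (0:ℝ) < Real.sqrt 2 := by linarith
  -- the set of relevant indices is finite
  obtain ⟨N, hN⟩ := Filter.eventually_atTop.mp (hlim.eventually_ge_atTop (r / Real.sqrt 2))
  have hfin : {n : ℕ | ‖t n‖ < r / Real.sqrt 2}.Finite := by
    apply Set.Finite.subset (Set.finite_Iio N)
    intro n hn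
    simp only [Set.mem_setOf_eq] at hn
    simp only [Set.mem_Iio]
    by_contra h
    exact absurd (hN n (le_of_not_gt h)) (not_le.mpr hn)
  have hmemF : ∀ n, n ∈ hfin.toFinset ↔ ‖t n‖ < r / Real.sqrt 2 :=
    fun n => hfin.mem_toFinset
  -- rewrite tsums as finite sums
  have hrw1 : ∀ φ : ℝ, (∑' n, if ‖t n‖ < r / Real.sqrt 2 then
      c n / ((r : ℂ) * Complex.exp ((φ : ℂ) * Complex.I) - t n) ^ 2 else 0)
      = ∑ n ∈ hfin.toFinset, c n / ((r : ℂ) * Complex.exp ((φ : ℂ) * Complex.I) - t n) ^ 2 := by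
    intro φ
    rw [tsum_eq_sum (s := hfin.toFinset)
      (fun n hn => if_neg (fun hc => hn ((hmemF n).mpr hc)))]
    exact Finset.sum_congr rfl fun n hn => if_pos ((hmemF n).mp hn)
  have hrw2 : (∑' n, if ‖t n‖ < r / Real.sqrt 2 then ‖c n‖ else 0)
      = ∑ n ∈ hfin.toFinset, ‖c n‖ := by
    rw [tsum_eq_sum (s := hfin.toFinset)
      (fun n hn => if_neg (fun hc => hn ((hmemF n).mpr hc)))]
    exact Finset.sum_congr rfl fun n hn => if_pos ((hmemF n).mp hn)
  rw [hrw2]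
  set M := (1 / r ^ 2) * ∑ n ∈ hfin.toFinset, ‖c n‖ with hM
  have hMnn : 0 ≤ M := by
    apply mul_nonneg (by positivity)
    exact Finset.sum_nonneg fun n _ => norm_nonneg _
  -- denominator lower bound
  have hd : 0 < r * (1 - 1/Real.sqrt 2) := by
    have h1 : 1/Real.sqrt 2 < 1 := by rw [div_lt_one hs0]; linarith
    nlinarith
  have hden : ∀ (φ : ℝ) (n : ℕ), ‖t n‖ < r / Real.sqrt 2 →
      r * (1 - 1/Real.sqrt 2) ≤ ‖(r : ℂ) * Complex.exp ((φ : ℂ) * Complex.I) - t n‖ := by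
    intro φ n hn
    have h1 : ‖(r:ℂ) * Complex.exp ((φ:ℂ) * Complex.I)‖ = r := by
      rw [norm_mul, Complex.norm_exp_ofReal_mul_I, Complex.norm_real, Real.norm_eq_abs, abs_of_pos hr, mul_one]
    have h2 := norm_sub_norm_le ((r:ℂ) * Complex.exp ((φ:ℂ) * Complex.I)) (t n)
    rw [h1] at h2
    have h3 : r / Real.sqrt 2 = r * (1/Real.sqrt 2) := by ring
    rw [h3] at hn
    nlinarith
  have hne : ∀ (φ : ℝ) (n : ℕ), n ∈ hfin.toFinset →
      ((r:ℂ) * Complex.exp ((φ:ℂ) * Complex.I) - t n) ^ 2 ≠ 0 := by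
    intro φ n hn
    apply pow_ne_zero
    intro h0
    have h4 := hden φ n ((hmemF n).mp hn)
    rw [h0] at h4
    simp only [norm_zero] at h4
    linarith
  -- key algebraic identity
  have hkey : (r * (1 - 1/Real.sqrt 2))^2 * (6 + 4 * Real.sqrt 2) = r^2 := by
    have h22 : Real.sqrt 2 * Real.sqrt 2 = 2 := Real.mul_self_sqrt (by norm_num)
    field_simp
    nlinarith [h22]
  -- termwise bound
  have hterm : ∀ (φ : ℝ) (n : ℕ), ‖t n‖ < r / Real.sqrt 2 →
      ‖c n / ((r:ℂ) * Complex.exp ((φ:ℂ) * Complex.I) - t n) ^ 2‖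
        ≤ ‖c n‖ * ((6 + 4 * Real.sqrt 2) / r^2) := by
    intro φ n hn
    rw [norm_div, norm_pow]
    have hw := hden φ n hn
    have hwpos : 0 < ‖(r:ℂ) * Complex.exp ((φ:ℂ) * Complex.I) - t n‖ :=
      lt_of_lt_of_le hd hw
    have hw2 : (r * (1 - 1/Real.sqrt 2))^2
        ≤ ‖(r:ℂ) * Complex.exp ((φ:ℂ) * Complex.I) - t n‖ ^ 2 :=
      pow_le_pow_left₀ hd.le hw 2
    rw [div_le_iff₀ (by positivity)]
    have h5 : 1 ≤ (6 + 4 * Real.sqrt 2) / r^2 *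
        ‖(r:ℂ) * Complex.exp ((φ:ℂ) * Complex.I) - t n‖ ^ 2 := by
      rw [div_mul_eq_mul_div, le_div_iff₀ (by positivity), one_mul]
      nlinarith
    nlinarith [norm_nonneg (c n), h5]
  -- pointwise bound on the sum
  have hS : ∀ φ : ℝ, ‖∑ n ∈ hfin.toFinset,
      c n / ((r:ℂ) * Complex.exp ((φ:ℂ) * Complex.I) - t n) ^ 2‖
      ≤ (6 + 4 * Real.sqrt 2) * M := by
    intro φ
    calc ‖∑ n ∈ hfin.toFinset,
        c n / ((r:ℂ) * Complex.exp ((φ:ℂ) * Complex.I) - t n) ^ 2‖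
        ≤ ∑ n ∈ hfin.toFinset,
          ‖c n / ((r:ℂ) * Complex.exp ((φ:ℂ) * Complex.I) - t n) ^ 2‖ := by
          exact
            norm_sum_le hfin.toFinset
              (fun n => c n / ((r:ℂ) * Complex.exp ((φ:ℂ) * Complex.I) - t n) ^ 2)
      _ ≤ ∑ n ∈ hfin.toFinset, ‖c n‖ * ((6 + 4 * Real.sqrt 2) / r^2) :=
          Finset.sum_le_sum fun n hn => hterm φ n ((hmemF n).mp hn)
      _ = (6 + 4 * Real.sqrt 2) * M := by
          rw [← Finset.sum_mul, hM]; ring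
  -- continuity & integrability
  have hcont : Continuous fun φ : ℝ => ‖∑ n ∈ hfin.toFinset,
      c n / ((r:ℂ) * Complex.exp ((φ:ℂ) * Complex.I) - t n) ^ 2‖ ^ p := by
    apply Continuous.rpow_const _ (fun x => Or.inr hp.le)
    apply continuous_norm.comp
    apply continuous_finset_sum
    intro n hn
    apply Continuous.div continuous_const
    · apply Continuous.pow
      exact (continuous_const.mul ((Complex.continuous_exp).comp
        (Complex.continuous_ofReal.mul continuous_const))).sub continuous_const
    · intro φ; exact hne φ n hn
  have h2pi : (0:ℝ) ≤ 2 * π := by positivity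
  have hcospos : 0 < Real.cos (π * p / 2) := by
    apply Real.cos_pos_of_mem_Ioo
    constructor
    · nlinarith [Real.pi_pos]
    · nlinarith [Real.pi_pos]
  have hknum := numeric_key p hp hp1
  have hK0 : (0:ℝ) ≤ 6 + 4 * Real.sqrt 2 := by positivity
  have hMp : 0 ≤ M ^ p := Real.rpow_nonneg hMnn p
  have h8 : 2 * π * (6 + 4 * Real.sqrt 2) ^ p ≤ 8 * π / Real.cos (π * p / 2) := by
    rw [le_div_iff₀ hcospos]
    nlinarith [Real.pi_pos, Real.rpow_nonneg hK0 p]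
  calc ∫ φ in (0:ℝ)..(2 * π),
        ‖∑' n, if ‖t n‖ < r / Real.sqrt 2 then
            c n / ((r : ℂ) * Complex.exp ((φ : ℂ) * Complex.I) - t n) ^ 2 else 0‖ ^ p
      = ∫ φ in (0:ℝ)..(2 * π), ‖∑ n ∈ hfin.toFinset,
          c n / ((r:ℂ) * Complex.exp ((φ:ℂ) * Complex.I) - t n) ^ 2‖ ^ p := by
        apply intervalIntegral.integral_congr
        intro φ _
        simp only [hrw1]
    _ ≤ ∫ φ in (0:ℝ)..(2 * π), ((6 + 4 * Real.sqrt 2) * M) ^ p := by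
        apply intervalIntegral.integral_mono_on h2pi
          (hcont.intervalIntegrable _ _) intervalIntegrable_const
        intro φ _
        exact Real.rpow_le_rpow (norm_nonneg _) (hS φ) hp.le
    _ = (2 * π) * ((6 + 4 * Real.sqrt 2) * M) ^ p := by
        rw [intervalIntegral.integral_const, smul_eq_mul]
        norm_num
    _ = (2 * π * (6 + 4 * Real.sqrt 2) ^ p) * M ^ p := by
        rw [Real.mul_rpow hK0 hMnn]; ring
    _ ≤ (8 * π / Real.cos (π * p / 2)) * M ^ p :=
        mul_le_mul_of_nonneg_right h8 hMp
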